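/- If the channel quality offsets are generic, then the social welfare optimization problem SWO has a unique optimal demand matrix: there is exactly one feasible demand matrix q* maximizing u(q) = ∑_{i=1}^I u_i(x_i(q)) over feasible demand matrices. -/

import Mathlib

/-- A demand matrix is feasible if it is componentwise nonnegative and the
demand to each provider equals its supply. -/
def Feasible {I J : ℕ} (Q : Fin J → ℝ) (q : Fin I → Fin J → ℝ) : Prop :=
  (∀ i j, 0 ≤ q i j) ∧ ∀ j, ∑ i, q i j = Q j

/-- The effective resource of user `i` under demand matrix `q`. -/
def effRes {I J : ℕ} (c q : Fin I → Fin J → ℝ) (i : Fin I) : ℝ :=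
  ∑ j, q i j * c i j

/-- The social welfare of a demand matrix. -/
def welfare {I J : ℕ} (u : Fin I → ℝ → ℝ) (c q : Fin I → Fin J → ℝ) : ℝ :=
  ∑ i, u i (effRes c q i)

/-- The channel quality offsets are generic: no cycle of distinct users and
distinct providers has offset-ratio product equal to one. -/
def Generic {I J : ℕ} (c : Fin I → Fin J → ℝ) : Prop :=
  ∀ (n : ℕ) (_hn : 2 ≤ n) (ii : Fin n → Fin I) (jj : Fin n → Fin J),
    Function.Injective ii → Function.Injective jj →
    ∏ k : Fin n, c (ii k) (jj (k - ⟨1, by omega⟩)) / c (ii k) (jj k) ≠ 1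

open Filter Set Topology



lemma aux_deriv_pos (f : ℝ → ℝ) (hd : Differentiable ℝ f)
    (hm : StrictMono f) (hcv : StrictConcaveOn ℝ Set.univ f) (x : ℝ) :
    0 < deriv f x := by
  have hs0 : 0 < f (x+1) - f x := sub_pos.2 (hm (by linarith))
  have hten : Tendsto (slope f x) (𝓝[≠] x) (𝓝 (deriv f x)) :=
    hasDerivAt_iff_tendsto_slope.1 (hd x).hasDerivAt
  have hten' : Tendsto (slope f x) (𝓝[>] x) (𝓝 (deriv f x)) :=
    hten.mono_left (nhdsWithin_mono _ fun y hy => ne_of_gt hy)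
  have hev : ∀ᶠ y in 𝓝[>] x, f (x+1) - f x ≤ slope f x y := by
    filter_upwards [Ioo_mem_nhdsGT_of_mem (Set.left_mem_Ico.2 (by linarith : x < x + 1))]
      with y hy
    have ht0 : 0 < y - x := sub_pos.2 hy.1
    have ht1 : y - x < 1 := by have := hy.2; linarith
    have hconc := hcv.concaveOn.2 (Set.mem_univ x) (Set.mem_univ (x+1))
      (by linarith : (0:ℝ) ≤ 1 - (y - x)) (le_of_lt ht0) (by ring)
    have hyy : (1 - (y-x)) • x + (y-x) • (x+1) = y := by simp [smul_eq_mul]; ring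
    rw [hyy] at hconc
    have : (y - x) * (f (x+1) - f x) ≤ f y - f x := by
      simp only [smul_eq_mul] at hconc; nlinarith
    rw [slope_def_field, le_div_iff₀ ht0]
    nlinarith
  have := ge_of_tendsto hten' hev
  linarith


lemma aux_exists_gt (φ : ℝ → ℝ) (D : ℝ) (hD : 0 < D) (h : HasDerivAt φ D 0)
    (δ : ℝ) (hδ : 0 < δ) : ∃ ε : ℝ, 0 < ε ∧ ε ≤ δ ∧ φ 0 < φ ε := by
  have hten : Tendsto (slope φ 0) (𝓝[≠] (0:ℝ)) (𝓝 D) := hasDerivAt_iff_tendsto_slope.1 h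
  have h1 : ∀ᶠ y in 𝓝[≠] (0:ℝ), 0 < slope φ 0 y := hten.eventually (lt_mem_nhds hD)
  have h2 : ∀ᶠ y in 𝓝[>] (0:ℝ), 0 < slope φ 0 y :=
    h1.filter_mono (nhdsWithin_mono _ fun y hy => ne_of_gt hy)
  have h3 : ∀ᶠ y in 𝓝[>] (0:ℝ), y ∈ Set.Ioc (0:ℝ) δ :=
    eventually_of_mem (Ioc_mem_nhdsGT_of_mem ⟨le_refl _, hδ⟩) fun y hy => hy
  obtain ⟨ε, hslope, hmem⟩ := (h2.and h3).exists
  refine ⟨ε, hmem.1, hmem.2, ?_⟩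
  rw [slope_def_field] at hslope
  have := mul_pos hslope (sub_pos.2 hmem.1 : (0:ℝ) < ε - 0)
  rw [div_mul_cancel₀] at this
  · linarith
  · simpa using ne_of_gt hmem.1


lemma aux_cycle {I J : ℕ} (E : Fin I → Fin J → Prop)
    (hrow : ∀ i j, E i j → ∃ j', j' ≠ j ∧ E i j')
    (hcol : ∀ i j, E i j → ∃ i', i' ≠ i ∧ E i' j)
    (i0 : Fin I) (j0 : Fin J) (h0 : E i0 j0) :
    ∃ (n : ℕ) (_hn : 2 ≤ n) (ii : Fin n → Fin I) (jj : Fin n → Fin J),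
      Function.Injective ii ∧ Function.Injective jj ∧
      (∀ k : Fin n, E (ii k) (jj k)) ∧
      (∀ k : Fin n, E (ii k) (jj (k - ⟨1, by omega⟩))) := by
  classical
  -- step function on the subtype of edges
  have hstep : ∀ p : {p : Fin I × Fin J // E p.1 p.2},
      ∃ p' : {p : Fin I × Fin J // E p.1 p.2},
        p'.1.1 ≠ p.1.1 ∧ p'.1.2 ≠ p.1.2 ∧ E p'.1.1 p.1.2 := by
    rintro ⟨⟨i, j⟩, hij⟩
    obtain ⟨i', hi', hEi'⟩ := hcol i j hij
    obtain ⟨j', hj', hEj'⟩ := hrow i' j hEi'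
    exact ⟨⟨(i', j'), hEj'⟩, hi', hj', hEi'⟩
  choose nxt hne1 hne2 hcr using hstep
  set w : ℕ → {p : Fin I × Fin J // E p.1 p.2} :=
    fun k => nxt^[k] ⟨(i0, j0), h0⟩ with hw
  set f : ℕ → Fin I := fun k => (w k).1.1 with hf
  set g : ℕ → Fin J := fun k => (w k).1.2 with hg
  have hwsucc : ∀ k, w (k+1) = nxt (w k) := by
    intro k; simp [hw, Function.iterate_succ_apply']
  have hE : ∀ k, E (f k) (g k) := fun k => (w k).2
  have hfne : ∀ k, f (k+1) ≠ f k := fun k => by rw [hf]; simp only [hwsucc]; exact hne1 (w k)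
  have hgne : ∀ k, g (k+1) ≠ g k := fun k => by rw [hg]; simp only [hwsucc]; exact hne2 (w k)
  have hcross : ∀ k, E (f (k+1)) (g k) := fun k => by
    rw [hf, hg]; simp only [hwsucc]; exact hcr (w k)
  -- pigeonhole: some repeat
  have hPex : ∃ m, 0 < m ∧ ∃ k, f k = f (k + m) ∨ g k = g (k + m) := by
    obtain ⟨a, b, hab, hfab⟩ := Finite.exists_ne_map_eq_of_infinite f
    rcases hab.lt_or_gt with h | h
    · exact ⟨b - a, by omega, a, Or.inl (by rw [hfab]; congr 1; omega)⟩
    · exact ⟨a - b, by omega, b, Or.inl (by rw [← hfab]; congr 1; omega)⟩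
  set n := Nat.find hPex with hn
  obtain ⟨hnpos, k, hk⟩ := Nat.find_spec hPex
  have hmin : ∀ m, 0 < m → m < n → ∀ t, f t ≠ f (t + m) ∧ g t ≠ g (t + m) := by
    intro m hm hmn t
    have h := Nat.find_min hPex hmn
    push_neg at h
    exact h hm t
  have hnorep : ∀ t t', t < t' → t' - t < n → f t ≠ f t' ∧ g t ≠ g t' := by
    intro t t' h1 h2
    have := hmin (t' - t) (by omega) h2 t
    rwa [show t + (t' - t) = t' by omega] at this
  rw [← hn] at hk hnpos
  have h2n : 2 ≤ n := by
    by_contra hlt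
    have h1 : n = 1 := by omega
    rw [h1] at hk
    rcases hk with h' | h'
    · exact hfne k h'.symm
    · exact hgne k h'.symm
  -- value of Fin subtraction by one
  have hsubval : ∀ m : Fin n, ((m - ⟨1, by omega⟩ : Fin n)).1 = (m.1 + (n - 1)) % n := by
    intro m; rw [Fin.sub_def]; simp [Nat.add_comm]
  rcases hk with hk | hk
  -- Case 1: user repeat
  · refine ⟨n, h2n, fun m => f (k + m.1), fun m => g (k + m.1), ?_, ?_, ?_, ?_⟩
    · intro a b hab
      by_contra hne
      rcases (Fin.val_ne_iff.2 hne).lt_or_gt with h | h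
      · exact (hnorep (k + a.1) (k + b.1) (by omega) (by omega)).1 hab
      · exact (hnorep (k + b.1) (k + a.1) (by omega) (by omega)).1 hab.symm
    · intro a b hab
      by_contra hne
      rcases (Fin.val_ne_iff.2 hne).lt_or_gt with h | h
      · exact (hnorep (k + a.1) (k + b.1) (by omega) (by omega)).2 hab
      · exact (hnorep (k + b.1) (k + a.1) (by omega) (by omega)).2 hab.symm
    · intro m; exact hE _
    · intro m
      show E (f (k + m.1)) (g (k + ((m - (⟨1, by omega⟩ : Fin n))).1))
      rw [hsubval m]
      rcases Nat.eq_zero_or_pos m.1 with hm | hm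
      · rw [hm]
        have hval : (0 + (n - 1)) % n = n - 1 := by
          rw [Nat.zero_add]; exact Nat.mod_eq_of_lt (by omega)
        rw [hval]
        have hfk : f (k + 0) = f ((k + (n-1)) + 1) := by
          rw [show (k + (n-1)) + 1 = k + n by omega]
          simpa using hk
        rw [hfk]
        exact hcross (k + (n-1))
      · have hv : (m.1 + (n - 1)) % n = m.1 - 1 := by
          have h2 := m.2
          have he : m.1 + (n - 1) = (m.1 - 1) + 1 * n := by omega
          rw [he, Nat.add_mul_mod_self_right]
          exact Nat.mod_eq_of_lt (by omega)
        rw [hv]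
        have he2 : k + m.1 = (k + (m.1 - 1)) + 1 := by omega
        rw [he2]
        exact hcross (k + (m.1 - 1))
  -- Case 2: provider repeat
  · refine ⟨n, h2n, fun m => f (k + m.1 + 1), fun m => g (k + m.1 + 1), ?_, ?_, ?_, ?_⟩
    · intro a b hab
      by_contra hne
      rcases (Fin.val_ne_iff.2 hne).lt_or_gt with h | h
      · exact (hnorep (k + a.1 + 1) (k + b.1 + 1) (by omega) (by omega)).1 hab
      · exact (hnorep (k + b.1 + 1) (k + a.1 + 1) (by omega) (by omega)).1 hab.symm
    · intro a b hab
      by_contra hne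
      rcases (Fin.val_ne_iff.2 hne).lt_or_gt with h | h
      · exact (hnorep (k + a.1 + 1) (k + b.1 + 1) (by omega) (by omega)).2 hab
      · exact (hnorep (k + b.1 + 1) (k + a.1 + 1) (by omega) (by omega)).2 hab.symm
    · intro m; exact hE _
    · intro m
      show E (f (k + m.1 + 1)) (g (k + ((m - (⟨1, by omega⟩ : Fin n))).1 + 1))
      rw [hsubval m]
      rcases Nat.eq_zero_or_pos m.1 with hm | hm
      · rw [hm]
        have hval : (0 + (n - 1)) % n = n - 1 := by
          rw [Nat.zero_add]; exact Nat.mod_eq_of_lt (by omega)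
        rw [hval]
        have hgk : g (k + (n-1) + 1) = g k := by
          rw [show k + (n-1) + 1 = k + n by omega]; exact hk.symm
        rw [hgk]
        simpa using hcross k
      · have hv : (m.1 + (n - 1)) % n = m.1 - 1 := by
          have h2 := m.2
          have he : m.1 + (n - 1) = (m.1 - 1) + 1 * n := by omega
          rw [he, Nat.add_mul_mod_self_right]
          exact Nat.mod_eq_of_lt (by omega)
        rw [hv]
        have he2 : k + m.1 + 1 = (k + (m.1 - 1) + 1) + 1 := by omega
        rw [he2]
        exact hcross (k + (m.1 - 1) + 1)


/-- If the channel quality offsets are generic, the social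
welfare optimization problem SWO has a unique optimal demand matrix. -/
theorem swo_unique_maximizer_of_generic
    (I J : ℕ) (hI : 0 < I) (hJ : 0 < J)
    (u : Fin I → ℝ → ℝ)
    (hu_diff : ∀ i, Differentiable ℝ (u i))
    (hu_mono : ∀ i, StrictMono (u i))
    (hu_conc : ∀ i, StrictConcaveOn ℝ Set.univ (u i))
    (Q : Fin J → ℝ) (hQ : ∀ j, 0 < Q j)
    (c : Fin I → Fin J → ℝ) (hc : ∀ i j, 0 < c i j)
    (hgen : Generic c) :
    ∃! q : Fin I → Fin J → ℝ, Feasible Q q ∧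
      ∀ q' : Fin I → Fin J → ℝ, Feasible Q q' → welfare u c q' ≤ welfare u c q := by
  classical
  haveI : Nonempty (Fin I) := ⟨⟨0, hI⟩⟩
  -- existence of a maximizer
  set S : Set (Fin I → Fin J → ℝ) := {q | Feasible Q q} with hS
  have hSne : S.Nonempty := by
    refine ⟨fun _ j => Q j / I, fun i j => le_of_lt (div_pos (hQ j) (by exact_mod_cast hI)), fun j => ?_⟩
    rw [Finset.sum_const, Finset.card_univ, Fintype.card_fin, nsmul_eq_mul]
    field_simp
  have heffcont : ∀ i : Fin I, Continuous fun q : Fin I → Fin J → ℝ => effRes c q i := by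
    intro i
    exact continuous_finset_sum _ fun j _ =>
      (((continuous_apply j).comp (continuous_apply i) :
        Continuous fun q : Fin I → Fin J → ℝ => q i j)).mul continuous_const
  have hwcont : Continuous fun q : Fin I → Fin J → ℝ => welfare u c q :=
    continuous_finset_sum _ fun i _ => (hu_diff i).continuous.comp (heffcont i)
  have hSclosed : IsClosed S := by
    have h1 : IsClosed (⋂ (i : Fin I) (j : Fin J), {q : Fin I → Fin J → ℝ | 0 ≤ q i j}) :=
      isClosed_iInter fun i => isClosed_iInter fun j =>
        isClosed_le continuous_const ((continuous_apply j).comp (continuous_apply i))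
    have h2 : IsClosed (⋂ j : Fin J, {q : Fin I → Fin J → ℝ | ∑ i, q i j = Q j}) :=
      isClosed_iInter fun j => isClosed_eq
        (continuous_finset_sum _ fun i _ => (continuous_apply j).comp (continuous_apply i))
        continuous_const
    have : S = (⋂ (i : Fin I) (j : Fin J), {q : Fin I → Fin J → ℝ | 0 ≤ q i j}) ∩
        (⋂ j : Fin J, {q : Fin I → Fin J → ℝ | ∑ i, q i j = Q j}) := by
      ext q; simp [hS, Feasible, Set.mem_iInter, forall_and]
    rw [this]; exact h1.inter h2
  have hScompact : IsCompact S := by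
    have hK : IsCompact (Set.pi Set.univ fun _ : Fin I =>
        Set.pi Set.univ fun j : Fin J => Set.Icc (0:ℝ) (Q j)) :=
      isCompact_univ_pi fun _ => isCompact_univ_pi fun j => isCompact_Icc
    refine hK.of_isClosed_subset hSclosed ?_
    intro q hq
    rw [Set.mem_univ_pi]
    intro i
    rw [Set.mem_univ_pi]
    intro j
    refine ⟨hq.1 i j, ?_⟩
    rw [← hq.2 j]
    exact Finset.single_le_sum (fun i' _ => hq.1 i' j) (Finset.mem_univ i)
  obtain ⟨q, hqS, hqmax⟩ := hScompact.exists_isMaxOn hSne hwcont.continuousOn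
  have hqmax' : ∀ r, Feasible Q r → welfare u c r ≤ welfare u c q := fun r hr => hqmax hr
  refine ⟨q, ⟨hqS, hqmax'⟩, ?_⟩
  rintro q' ⟨hq'F, hq'max⟩
  have hqF : Feasible Q q := hqS
  -- equal welfare
  have hweq : welfare u c q' = welfare u c q := le_antisymm (hqmax' q' hq'F) (hq'max q hqF)
  -- equal effective resources
  set x : Fin I → ℝ := fun i => effRes c q i with hx
  have hxeq : ∀ i, effRes c q' i = x i := by
    by_contra hnex
    push_neg at hnex
    obtain ⟨i1, hi1⟩ := hnex
    set m : Fin I → Fin J → ℝ := fun i j => (q i j + q' i j) / 2 with hm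
    have hmF : Feasible Q m := by
      constructor
      · intro i j
        have h1 := hqF.1 i j
        have h2 := hq'F.1 i j
        simp only [hm]
        linarith
      · intro j
        simp only [hm]
        rw [← Finset.sum_div, Finset.sum_add_distrib, hqF.2 j, hq'F.2 j]
        ring
    have hmx : ∀ i, effRes c m i = (effRes c q i + effRes c q' i) / 2 := by
      intro i
      simp only [effRes, hm]
      rw [← Finset.sum_add_distrib, Finset.sum_div]
      exact Finset.sum_congr rfl fun j _ => by ring
    have hhalf : ∀ i, (u i (effRes c q i) + u i (effRes c q' i)) / 2 ≤ u i (effRes c m i) := by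
      intro i
      have hcc := (hu_conc i).concaveOn.2 (Set.mem_univ (effRes c q i))
        (Set.mem_univ (effRes c q' i)) (by norm_num : (0:ℝ) ≤ 1/2)
        (by norm_num : (0:ℝ) ≤ 1/2) (by norm_num : (1:ℝ)/2 + 1/2 = 1)
      simp only [smul_eq_mul] at hcc
      rw [hmx i]
      calc (u i (effRes c q i) + u i (effRes c q' i)) / 2
          = 1/2 * u i (effRes c q i) + 1/2 * u i (effRes c q' i) := by ring
        _ ≤ u i (1/2 * effRes c q i + 1/2 * effRes c q' i) := hcc
        _ = u i ((effRes c q i + effRes c q' i) / 2) := by ring_nf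
    have hstrict : (u i1 (effRes c q i1) + u i1 (effRes c q' i1)) / 2 < u i1 (effRes c m i1) := by
      have hcc := (hu_conc i1).2 (Set.mem_univ (effRes c q i1))
        (Set.mem_univ (effRes c q' i1)) (fun h => hi1 h.symm)
        (by norm_num : (0:ℝ) < 1/2) (by norm_num : (0:ℝ) < 1/2)
        (by norm_num : (1:ℝ)/2 + 1/2 = 1)
      simp only [smul_eq_mul] at hcc
      rw [hmx i1]
      calc (u i1 (effRes c q i1) + u i1 (effRes c q' i1)) / 2
          = 1/2 * u i1 (effRes c q i1) + 1/2 * u i1 (effRes c q' i1) := by ring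
        _ < u i1 (1/2 * effRes c q i1 + 1/2 * effRes c q' i1) := hcc
        _ = u i1 ((effRes c q i1 + effRes c q' i1) / 2) := by ring_nf
    have hwm : welfare u c q < welfare u c m := by
      have hqhalf : welfare u c q = ∑ i, (u i (effRes c q i) + u i (effRes c q' i)) / 2 := by
        have : welfare u c q = (welfare u c q + welfare u c q') / 2 := by rw [hweq]; ring
        rw [this]
        simp only [welfare]
        rw [← Finset.sum_add_distrib, ← Finset.sum_div]
      rw [hqhalf]
      exact Finset.sum_lt_sum (fun i _ => hhalf i) ⟨i1, Finset.mem_univ i1, hstrict⟩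
    exact absurd (hqmax' m hmF) (not_le.2 hwm)
  -- positive marginal utilities
  set lam : Fin I → ℝ := fun i => deriv (u i) (x i) with hlamdef
  have hlam : ∀ i, 0 < lam i := fun i =>
    aux_deriv_pos (u i) (hu_diff i) (hu_mono i) (hu_conc i) (x i)
  -- KKT-type claim
  have claimA : ∀ r : Fin I → Fin J → ℝ, Feasible Q r → (∀ a, effRes c r a = x a) →
      ∀ i i' j, 0 < r i j → lam i' * c i' j ≤ lam i * c i j := by
    intro r hrF hrx i i' j hrij
    by_contra hlt
    push_neg at hlt
    have hii' : i ≠ i' := by rintro rfl; exact lt_irrefl _ hlt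
    set ρ : Fin I → ℝ :=
      fun a => ((if a = i' then (1:ℝ) else 0) - (if a = i then 1 else 0)) * c a j with hρ
    set rε : ℝ → Fin I → Fin J → ℝ := fun ε a b =>
      r a b + ε * (((if a = i' then (1:ℝ) else 0) - (if a = i then 1 else 0))
        * (if b = j then 1 else 0)) with hrε
    have heff : ∀ ε a, effRes c (rε ε) a = x a + ε * ρ a := by
      intro ε a
      simp only [effRes, hrε, hρ]
      have hterm : ∀ b, (r a b + ε * (((if a = i' then (1:ℝ) else 0) - (if a = i then 1 else 0))
          * (if b = j then 1 else 0))) * c a b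
          = r a b * c a b + ε * (((if a = i' then (1:ℝ) else 0) - (if a = i then 1 else 0))
            * (if b = j then c a b else 0)) := by
        intro b; by_cases hb : b = j <;> simp [hb] <;> ring
      rw [Finset.sum_congr rfl fun b _ => hterm b, Finset.sum_add_distrib]
      have h1 : ∑ b, ε * (((if a = i' then (1:ℝ) else 0) - (if a = i then 1 else 0))
          * (if b = j then c a b else 0))
          = ε * (((if a = i' then (1:ℝ) else 0) - (if a = i then 1 else 0)) * c a j) := by
        rw [← Finset.mul_sum]
        congr 1
        rw [← Finset.mul_sum]
        congr 1
        exact Finset.sum_ite_eq' Finset.univ j (fun b => c a b) |>.trans (by simp)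
      rw [h1]
      have h2 : ∑ b, r a b * c a b = x a := hrx a
      rw [h2]
    set D : ℝ := lam i' * c i' j - lam i * c i j with hD
    have hDpos : 0 < D := by rw [hD]; linarith
    have hsum : ∑ a, lam a * ρ a = D := by
      simp only [hρ]
      have hterm : ∀ a, lam a * (((if a = i' then (1:ℝ) else 0) - (if a = i then 1 else 0)) * c a j)
          = (if a = i' then lam a * c a j else 0) - (if a = i then lam a * c a j else 0) := by
        intro a; by_cases h1 : a = i' <;> by_cases h2 : a = i <;>
          simp [h1, h2, hii', hii'.symm] <;> ring
      rw [Finset.sum_congr rfl fun a _ => hterm a, Finset.sum_sub_distrib,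
        Finset.sum_ite_eq' Finset.univ i' (fun a => lam a * c a j),
        Finset.sum_ite_eq' Finset.univ i (fun a => lam a * c a j)]
      simp [hD]
    have hφ : HasDerivAt (fun ε => welfare u c (rε ε)) D 0 := by
      have hfun : (fun ε => welfare u c (rε ε)) = fun ε => ∑ a, u a (x a + ε * ρ a) := by
        funext ε
        simp only [welfare]
        exact Finset.sum_congr rfl fun a _ => by rw [heff]
      rw [hfun, ← hsum]
      apply HasDerivAt.fun_sum
      intro a _
      have hinner : HasDerivAt (fun ε : ℝ => x a + ε * ρ a) (ρ a) 0 :=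
        (hasDerivAt_mul_const (ρ a)).const_add (x a)
      have houter := ((hu_diff a) (x a + 0 * ρ a)).hasDerivAt
      have hcomp := houter.comp 0 hinner
      simpa [hlamdef, Function.comp_def] using hcomp
    obtain ⟨ε, hε0, hεle, hφlt⟩ := aux_exists_gt _ D hDpos hφ (r i j) hrij
    have hfeas : Feasible Q (rε ε) := by
      constructor
      · intro a b
        simp only [hrε]
        have hr1 := hrF.1 a b
        by_cases hb : b = j
        · subst hb
          by_cases h1 : a = i
          · subst h1
            simp [hii']
            linarith
          · by_cases h2 : a = i'
            · subst h2
              simp [h1]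
              linarith [hε0.le]
            · simp [h1, h2]
              linarith
        · simp [hb]
          linarith
      · intro b
        simp only [hrε]
        rw [Finset.sum_add_distrib, hrF.2 b]
        have hz : ∑ a, ε * (((if a = i' then (1:ℝ) else 0) - (if a = i then 1 else 0))
            * (if b = j then 1 else 0)) = 0 := by
          by_cases hb : b = j
          · simp [hb, ← Finset.mul_sum, Finset.sum_sub_distrib,
              Finset.sum_ite_eq' Finset.univ i' (fun _ => (1:ℝ)),
              Finset.sum_ite_eq' Finset.univ i (fun _ => (1:ℝ))]
          · simp [hb]
        rw [hz, add_zero]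
    have h0eq : welfare u c (rε 0) = welfare u c q := by
      have hr0 : rε 0 = r := by funext a b; simp [hrε]
      rw [hr0]
      simp only [welfare]
      refine Finset.sum_congr rfl fun a _ => ?_
      rw [hrx a, hx]
    have hle := hqmax' (rε ε) hfeas
    rw [h0eq] at hφlt
    have hle' := hqmax' r hrF
    linarith
  have hA_q := claimA q hqF (fun a => by rw [hx])
  have hA_q' := claimA q' hq'F hxeq
  -- common prices
  set p : Fin J → ℝ :=
    fun j => Finset.univ.sup' Finset.univ_nonempty (fun i => lam i * c i j) with hp
  have hedge : ∀ i j, (0 < q i j ∨ 0 < q' i j) → lam i * c i j = p j := by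
    intro i j hpos
    have hub : ∀ i'', lam i'' * c i'' j ≤ lam i * c i j := by
      rcases hpos with h | h
      · exact fun i'' => hA_q i i'' j h
      · exact fun i'' => hA_q' i i'' j h
    refine le_antisymm (Finset.le_sup' (fun i' => lam i' * c i' j) (Finset.mem_univ i)) ?_
    exact Finset.sup'_le _ _ fun i'' _ => hub i''
  have hp_pos : ∀ j, 0 < p j := fun j =>
    lt_of_lt_of_le (mul_pos (hlam ⟨0, hI⟩) (hc ⟨0, hI⟩ j))
      (Finset.le_sup' (fun i' => lam i' * c i' j) (Finset.mem_univ ⟨0, hI⟩))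
  -- the difference matrix
  by_contra hne
  set d : Fin I → Fin J → ℝ := fun i j => q' i j - q i j with hdd
  have hexd : ∃ i j, d i j ≠ 0 := by
    by_contra hall
    push_neg at hall
    exact hne (funext fun i => funext fun j => by
      have := hall i j; simp [hdd] at this; linarith)
  obtain ⟨i0, j0, hd0⟩ := hexd
  have hrow0 : ∀ i, ∑ j, d i j * c i j = 0 := by
    intro i
    have h1 : ∑ j, d i j * c i j = (∑ j, q' i j * c i j) - ∑ j, q i j * c i j := by
      rw [← Finset.sum_sub_distrib]
      exact Finset.sum_congr rfl fun j _ => by simp [hdd]; ring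
    rw [h1]
    have h2 := hxeq i
    simp only [effRes] at h2
    rw [h2, hx]
    simp [effRes]
  have hcol0 : ∀ j, ∑ i, d i j = 0 := by
    intro j
    have : ∑ i, d i j = (∑ i, q' i j) - ∑ i, q i j := by
      rw [← Finset.sum_sub_distrib]
    rw [this, hq'F.2 j, hqF.2 j, sub_self]
  have hrowP : ∀ i j, d i j ≠ 0 → ∃ j', j' ≠ j ∧ d i j' ≠ 0 := by
    intro i j hij
    by_contra hno
    push_neg at hno
    have hsingle : ∑ j', d i j' * c i j' = d i j * c i j := by
      refine Finset.sum_eq_single_of_mem j (Finset.mem_univ j) fun b _ hb => ?_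
      rw [hno b hb, zero_mul]
    rw [hrow0 i] at hsingle
    exact hij (by
      rcases mul_eq_zero.1 hsingle.symm with h | h
      · exact h
      · exact absurd h (ne_of_gt (hc i j)))
  have hcolP : ∀ i j, d i j ≠ 0 → ∃ i', i' ≠ i ∧ d i' j ≠ 0 := by
    intro i j hij
    by_contra hno
    push_neg at hno
    have hsingle : ∑ i', d i' j = d i j :=
      Finset.sum_eq_single_of_mem i (Finset.mem_univ i) fun b _ hb => hno b hb
    rw [hcol0 j] at hsingle
    exact hij hsingle.symm
  obtain ⟨n, hn2, ii, jj, hiinj, hjinj, hEd, hEc⟩ :=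
    aux_cycle (fun i j => d i j ≠ 0) hrowP hcolP i0 j0 hd0
  have hkey : ∀ i j, d i j ≠ 0 → lam i * c i j = p j := by
    intro i j hij
    apply hedge
    rcases lt_trichotomy (q i j) (q' i j) with h | h | h
    · exact Or.inr (lt_of_le_of_lt (hqF.1 i j) h)
    · exact absurd (by simp [hdd, h]) hij
    · exact Or.inl (lt_of_le_of_lt (hq'F.1 i j) h)
  apply hgen n hn2 ii jj hiinj hjinj
  have hfac : ∀ k : Fin n, c (ii k) (jj (k - ⟨1, by omega⟩)) / c (ii k) (jj k)
      = p (jj (k - ⟨1, by omega⟩)) / p (jj k) := by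
    intro k
    have h1 := hkey _ _ (hEc k)
    have h2 := hkey _ _ (hEd k)
    rw [← h1, ← h2, mul_div_mul_left _ _ (ne_of_gt (hlam (ii k)))]
  rw [Finset.prod_congr rfl fun k _ => hfac k, Finset.prod_div_distrib]
  haveI : NeZero n := ⟨by omega⟩
  have hre : ∏ k : Fin n, p (jj (k - ⟨1, by omega⟩)) = ∏ k : Fin n, p (jj k) :=
    Fintype.prod_equiv (Equiv.subRight (⟨1, by omega⟩ : Fin n)) _ _
      (fun k => by simp [Equiv.subRight])
  rw [hre, div_self (ne_of_gt (Finset.prod_pos fun k _ => hp_pos (jj k)))]
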